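/- Let R be a commutative ring, S a multiplicative subset of R, and f : A → B a u-S-isomorphism of R-modules. Then A is u-S-pseudo-projective if and only if B is u-S-pseudo-projective. -/
import Mathlib


/-!  Definitions for uniformly-S-pseudo-projective modules
(M. Adarbeh, M. Saleh, "Uniformly-S-pseudo-projective modules"). -/

universe u v w

/-- `S` is a multiplicative subset of the commutative ring `R`:
`1 ∈ S`, `0 ∉ S`, and `S` is closed under multiplication. -/
def IsMultSubset {R : Type u} [CommRing R] (S : Set R) : Prop :=
  1 ∈ S ∧ (0 : R) ∉ S ∧ ∀ ⦃a b : R⦄, a ∈ S → b ∈ S → a * b ∈ S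

/-- An `R`-module `T` is `u`-`S`-torsion if some `s ∈ S` annihilates it. -/
def IsUSTorsion {R : Type u} [CommRing R] (S : Set R) (T : Type v) [AddCommGroup T]
    [Module R T] : Prop :=
  ∃ s ∈ S, ∀ t : T, s • t = 0

/-- `f` is a `u`-`S`-monomorphism: its kernel is `u`-`S`-torsion. -/
def IsUSMono {R : Type u} [CommRing R] (S : Set R) {M : Type v} {N : Type w}
    [AddCommGroup M] [Module R M] [AddCommGroup N] [Module R N] (f : M →ₗ[R] N) : Prop :=
  ∃ s ∈ S, ∀ m ∈ LinearMap.ker f, s • m = (0 : M)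

/-- `f` is a `u`-`S`-epimorphism: its cokernel is `u`-`S`-torsion. -/
def IsUSEpi {R : Type u} [CommRing R] (S : Set R) {M : Type v} {N : Type w}
    [AddCommGroup M] [Module R M] [AddCommGroup N] [Module R N] (f : M →ₗ[R] N) : Prop :=
  ∃ s ∈ S, ∀ n : N, s • n ∈ LinearMap.range f

/-- `f` is a `u`-`S`-isomorphism: both a `u`-`S`-monomorphism and a `u`-`S`-epimorphism. -/
def IsUSIso {R : Type u} [CommRing R] (S : Set R) {M : Type v} {N : Type w}
    [AddCommGroup M] [Module R M] [AddCommGroup N] [Module R N] (f : M →ₗ[R] N) : Prop :=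
  IsUSMono S f ∧ IsUSEpi S f

/-- `P` is `u`-`S`-pseudo-projective: for every submodule `K` of `P` there is `s ∈ S` such that
every `u`-`S`-epimorphism `f : P → P/K` satisfies `s • f = π_K ∘ g` for some endomorphism
`g` of `P`. -/
def IsUSPseudoProjective {R : Type u} [CommRing R] (S : Set R) (P : Type v)
    [AddCommGroup P] [Module R P] : Prop :=
  ∀ K : Submodule R P, ∃ s ∈ S, ∀ f : P →ₗ[R] P ⧸ K, IsUSEpi S f →
    ∃ g : P →ₗ[R] P, s • f = K.mkQ.comp g

/-- `M` is `u`-`S`-quasi-projective. -/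
def IsUSQuasiProjective {R : Type u} [CommRing R] (S : Set R) (M : Type v)
    [AddCommGroup M] [Module R M] : Prop :=
  ∀ K : Submodule R M, ∃ s ∈ S, ∀ f : M →ₗ[R] M ⧸ K,
    ∃ g : M →ₗ[R] M, s • f = K.mkQ.comp g

/-- `Q` is `u`-`S`-projective (test modules in `Type v₁`). -/
def IsUSProjective.{u₁, v₁, w₁} {R : Type u₁} [CommRing R] (S : Set R) (Q : Type w₁)
    [AddCommGroup Q] [Module R Q] : Prop :=
  ∀ (B C : Type v₁) [AddCommGroup B] [AddCommGroup C] [Module R B] [Module R C]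
    (g : B →ₗ[R] C), IsUSEpi S g →
      ∃ s ∈ S, ∀ h : Q →ₗ[R] C, ∃ h' : Q →ₗ[R] B, s • h = g.comp h'

/-- `M` is `u`-`S`-injective (test modules in `Type v₁`). -/
def IsUSInjective.{u₁, v₁, w₁} {R : Type u₁} [CommRing R] (S : Set R) (M : Type w₁)
    [AddCommGroup M] [Module R M] : Prop :=
  ∀ (A B : Type v₁) [AddCommGroup A] [AddCommGroup B] [Module R A] [Module R B]
    (f : A →ₗ[R] B), IsUSMono S f →
      ∃ s ∈ S, ∀ h : A →ₗ[R] M, ∃ h' : B →ₗ[R] M, s • h = h'.comp f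

/-- `E` is `u`-`S`-pseudo-injective. -/
def IsUSPseudoInjective {R : Type u} [CommRing R] (S : Set R) (E : Type v)
    [AddCommGroup E] [Module R E] : Prop :=
  ∀ K : Submodule R E, ∃ s ∈ S, ∀ f : ↥K →ₗ[R] E, IsUSMono S f →
    ∃ g : E →ₗ[R] E, g.comp K.subtype = s • f

/-- The sequence `0 → A →f B →g C → 0` is short `u`-`S`-exact. -/
def IsShortUSExact {R : Type u} [CommRing R] (S : Set R) {A B C : Type v}
    [AddCommGroup A] [Module R A] [AddCommGroup B] [Module R B] [AddCommGroup C] [Module R C]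
    (f : A →ₗ[R] B) (g : B →ₗ[R] C) : Prop :=
  IsUSMono S f ∧ IsUSEpi S g ∧
    ∃ s ∈ S, (∀ x ∈ LinearMap.ker g, s • x ∈ LinearMap.range f) ∧
      (∀ x ∈ LinearMap.range f, s • x ∈ LinearMap.ker g)

/-- The short `u`-`S`-exact sequence `0 → A →f B →g C → 0` is `u`-`S`-split:
some multiple `s • 1_A` of the identity factors back through `f`. -/
def IsUSSplitSeq {R : Type u} [CommRing R] (S : Set R) {A B : Type v}
    [AddCommGroup A] [Module R A] [AddCommGroup B] [Module R B] (f : A →ₗ[R] B) : Prop :=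
  ∃ s ∈ S, ∃ f' : B →ₗ[R] A, f'.comp f = s • (LinearMap.id : A →ₗ[R] A)

/-- `M` is a `u`-`S`-semisimple module (test sequences with modules in `Type v₁`). -/
def IsUSSemisimpleModule.{u₁, v₁} {R : Type u₁} [CommRing R] (S : Set R) (M : Type v₁)
    [AddCommGroup M] [Module R M] : Prop :=
  ∀ (A C : Type v₁) [AddCommGroup A] [AddCommGroup C] [Module R A] [Module R C]
    (f : A →ₗ[R] M) (g : M →ₗ[R] C), IsShortUSExact S f g → IsUSSplitSeq S f

/-- `R` is a `u`-`S`-semisimple ring: every free `R`-module is `u`-`S`-semisimple. -/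
def IsUSSemisimpleRing.{u₁, v₁} {R : Type u₁} [CommRing R] (S : Set R) : Prop :=
  ∀ (F : Type v₁) [AddCommGroup F] [Module R F], Module.Free R F →
    IsUSSemisimpleModule.{u₁, v₁} S F

/-- A submodule `N` of `M` is a `u`-`S`-direct summand of `M` if there is an `R`-module `N'`
and a `u`-`S`-isomorphism between `M` and `N ⊕ N'`. -/
def IsUSDirectSummand {R : Type u} [CommRing R] (S : Set R) {M : Type v}
    [AddCommGroup M] [Module R M] (N : Submodule R M) : Prop :=
  ∃ (N' : ModuleCat.{v} R) (h : M →ₗ[R] (↥N × ↥N')), IsUSIso S h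

/-- `A` is `u`-`S`-projective relative to `B`. -/
def IsUSProjectiveRel {R : Type u} [CommRing R] (S : Set R) (A : Type v) (B : Type w)
    [AddCommGroup A] [Module R A] [AddCommGroup B] [Module R B] : Prop :=
  ∀ K : Submodule R B, ∃ s ∈ S, ∀ f : A →ₗ[R] B ⧸ K,
    ∃ h : A →ₗ[R] B, s • f = K.mkQ.comp h

private theorem usiso_quasi_inv {R : Type u} [CommRing R] (S : Set R) (hS : IsMultSubset S)
    {A B : Type v} [AddCommGroup A] [Module R A] [AddCommGroup B] [Module R B]
    (f : A →ₗ[R] B) (hf : IsUSIso S f) :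
    ∃ t ∈ S, ∃ g : B →ₗ[R] A, (∀ a, g (f a) = t • a) ∧ (∀ b, f (g b) = t • b) := by
  obtain ⟨⟨s₁, hs₁S, hs₁⟩, ⟨s₂, hs₂S, hs₂⟩⟩ := hf
  have h2 : ∀ n : B, ∃ y : A, f y = s₂ • n := fun n => LinearMap.mem_range.mp (hs₂ n)
  choose a ha using h2
  have key : ∀ (b : B) (x : A), f x = s₂ • b → s₁ • a b = s₁ • x := by
    intro b x hx
    have hk : a b - x ∈ LinearMap.ker f := by
      rw [LinearMap.mem_ker, map_sub, ha, hx, sub_self]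
    have h0 := hs₁ _ hk
    rw [smul_sub, sub_eq_zero] at h0
    exact h0
  refine ⟨s₁ * s₂, hS.2.2 hs₁S hs₂S, ?_⟩
  refine ⟨{ toFun := fun b => s₁ • a b
            map_add' := ?_
            map_smul' := ?_ }, ?_, ?_⟩
  · intro b b'
    have h5 : f (a b + a b') = s₂ • (b + b') := by rw [map_add, ha, ha, smul_add]
    show s₁ • a (b + b') = s₁ • a b + s₁ • a b'
    rw [key _ _ h5, smul_add]
  · intro r b
    have h5 : f (r • a b) = s₂ • (r • b) := by rw [map_smul, ha, smul_comm]
    show s₁ • a (r • b) = r • (s₁ • a b)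
    rw [key _ _ h5, smul_comm]
  · intro x
    have : f (s₂ • x) = s₂ • f x := by rw [map_smul]
    simp only [LinearMap.coe_mk, AddHom.coe_mk]
    rw [key _ _ this, mul_smul, smul_comm]
  · intro b
    simp only [LinearMap.coe_mk, AddHom.coe_mk]
    rw [map_smul, ha, mul_smul]

private theorem pp_transfer {R : Type u} [CommRing R] (S : Set R) (hS : IsMultSubset S)
    {A B : Type v} [AddCommGroup A] [Module R A] [AddCommGroup B] [Module R B]
    (f : A →ₗ[R] B) (g : B →ₗ[R] A) (t : R) (htS : t ∈ S)
    (hgf : ∀ a, g (f a) = t • a) (hfg : ∀ b, f (g b) = t • b)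
    (hA : IsUSPseudoProjective S A) : IsUSPseudoProjective S B := by
  intro K
  set K' : Submodule R A := K.comap f with hK'def
  obtain ⟨s, hsS, hs⟩ := hA K'
  refine ⟨s * (t * t), hS.2.2 hsS (hS.2.2 htS htS), ?_⟩
  intro h hepi
  have hKg : K ≤ K'.comap g := by
    intro k hk
    simp only [hK'def, Submodule.mem_comap, hfg]
    exact K.smul_mem t hk
  have hK'f : K' ≤ K.comap f := le_refl _
  set gbar : (B ⧸ K) →ₗ[R] (A ⧸ K') := K.mapQ K' g hKg with hgbar
  set fbar : (A ⧸ K') →ₗ[R] (B ⧸ K) := K'.mapQ K f hK'f with hfbar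
  have hfg' : ∀ x : B ⧸ K, fbar (gbar x) = t • x := by
    intro x
    obtain ⟨b, rfl⟩ := Submodule.Quotient.mk_surjective K x
    rw [hgbar, hfbar, Submodule.mapQ_apply, Submodule.mapQ_apply, hfg,
      Submodule.Quotient.mk_smul]
  have hgf' : ∀ x : A ⧸ K', gbar (fbar x) = t • x := by
    intro x
    obtain ⟨c, rfl⟩ := Submodule.Quotient.mk_surjective K' x
    rw [hgbar, hfbar, Submodule.mapQ_apply, Submodule.mapQ_apply, hgf,
      Submodule.Quotient.mk_smul]
  set F : A →ₗ[R] A ⧸ K' := gbar.comp (h.comp f) with hF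
  have hFepi : IsUSEpi S F := by
    obtain ⟨sh, hshS, hsh⟩ := hepi
    refine ⟨t * (sh * t), hS.2.2 htS (hS.2.2 hshS htS), ?_⟩
    intro x
    obtain ⟨b, hb⟩ := LinearMap.mem_range.mp (hsh (fbar x))
    refine LinearMap.mem_range.mpr ⟨g b, ?_⟩
    have : F (g b) = t • gbar (h b) := by
      rw [hF]
      simp only [LinearMap.comp_apply]
      rw [hfg, map_smul, map_smul]
    rw [this, hb, map_smul, hgf', mul_smul, mul_smul]
  obtain ⟨G', hG'⟩ := hs F hFepi
  refine ⟨(f.comp G').comp g, ?_⟩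
  ext b
  have h1 : s • F (g b) = K'.mkQ (G' (g b)) := by
    have := congrArg (fun φ : A →ₗ[R] A ⧸ K' => φ (g b)) hG'
    simpa using this
  have h2 : F (g b) = t • gbar (h b) := by
    rw [hF]
    simp only [LinearMap.comp_apply]
    rw [hfg, map_smul, map_smul]
  have h3 : fbar (s • F (g b)) = s • (t • (t • h b)) := by
    rw [h2, map_smul, map_smul, hfg']
  have h4 : fbar (K'.mkQ (G' (g b))) = K.mkQ (f (G' (g b))) := by
    rw [hfbar, Submodule.mkQ_apply, Submodule.mapQ_apply, Submodule.mkQ_apply]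
  simp only [LinearMap.smul_apply, LinearMap.comp_apply]
  rw [mul_smul, mul_smul]
  rw [← h3, h1, h4]

/-- If `f : A → B` is a `u`-`S`-isomorphism, then `A` is `u`-`S`-pseudo-projective if and only
if `B` is `u`-`S`-pseudo-projective. -/
theorem uSPseudoProjective_iff_of_uSIso
    {R : Type u} [CommRing R] (S : Set R) (hS : IsMultSubset S)
    {A B : Type v} [AddCommGroup A] [Module R A] [AddCommGroup B] [Module R B]
    (f : A →ₗ[R] B) (hf : IsUSIso S f) :
    IsUSPseudoProjective S A ↔ IsUSPseudoProjective S B := by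
  obtain ⟨t, htS, g, hgf, hfg⟩ := usiso_quasi_inv S hS f hf
  exact ⟨fun hA => pp_transfer S hS f g t htS hgf hfg hA,
    fun hB => pp_transfer S hS g f t htS hfg hgf hB⟩
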